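/- For every δ ∈ (0,1), the equation (1+α²)Φ(−α) − αφ(α) = δ/2 has a unique non-negative solution α_min(δ). -/

import Mathlib

set_option maxHeartbeats 800000

open Real MeasureTheory Set Filter

/-- Standard Gaussian density φ. -/
noncomputable def stdGaussPDF (z : ℝ) : ℝ := Real.exp (-z^2/2) / Real.sqrt (2*Real.pi)

/-- Standard Gaussian CDF Φ. -/
noncomputable def stdGaussCDF (z : ℝ) : ℝ := ∫ u in Set.Iic z, stdGaussPDF u

lemma phi_pos (u : ℝ) : 0 < stdGaussPDF u :=
  div_pos (Real.exp_pos _) (Real.sqrt_pos.2 (by positivity))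

lemma phi_eq : stdGaussPDF = fun u => Real.exp (-(1/2) * u^2) / Real.sqrt (2*Real.pi) := by
  funext u
  rw [stdGaussPDF]
  congr 1
  ring_nf

lemma phi_integrable : Integrable stdGaussPDF := by
  rw [phi_eq]
  exact (integrable_exp_neg_mul_sq (by norm_num : (0:ℝ) < 1/2)).div_const _

lemma phi_cont : Continuous stdGaussPDF := by
  unfold stdGaussPDF
  fun_prop

lemma phi_even (u : ℝ) : stdGaussPDF (-u) = stdGaussPDF u := by
  simp [stdGaussPDF, neg_sq]

lemma phi_hasDeriv (z : ℝ) : HasDerivAt stdGaussPDF (-z * stdGaussPDF z) z := by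
  have h1 : HasDerivAt (fun x : ℝ => -x^2/2) (-z) z := by
    have h := ((hasDerivAt_pow 2 z).neg).div_const 2
    refine h.congr_deriv ?_
    simp [pow_one]
    ring
  have h2 := (h1.exp).div_const (Real.sqrt (2*Real.pi))
  have hfun : stdGaussPDF = fun x : ℝ => Real.exp (-x^2/2) / Real.sqrt (2*Real.pi) := rfl
  rw [hfun]
  refine h2.congr_deriv ?_
  simp only [stdGaussPDF]
  ring

lemma neg_mul_phi_integrable : Integrable (fun u : ℝ => -u * stdGaussPDF u) := by
  have h := ((integrable_mul_exp_neg_mul_sq (by norm_num : (0:ℝ) < 1/2)).div_const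
    (Real.sqrt (2*Real.pi))).neg
  refine h.congr (Filter.Eventually.of_forall fun u => ?_)
  simp only [Pi.neg_apply, stdGaussPDF]
  have : -((1:ℝ)/2) * u^2 = -u^2/2 := by ring
  rw [this]
  ring

lemma phi_tendsto_atBot : Tendsto stdGaussPDF atBot (nhds 0) := by
  rw [phi_eq]
  have h2 : Tendsto (fun u : ℝ => u^2) atBot atTop := by
    have h := (tendsto_pow_atTop (by norm_num : 2 ≠ 0)).comp
      (tendsto_abs_atBot_atTop (G := ℝ))
    simpa only [Function.comp_def, sq_abs] using h
  have h1 : Tendsto (fun u : ℝ => -(1/2) * u^2) atBot atBot := by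
    have h3 : Tendsto (fun u : ℝ => (1/2 : ℝ) * u^2) atBot atTop :=
      h2.const_mul_atTop (by norm_num)
    have := tendsto_neg_atTop_atBot.comp h3
    simpa only [Function.comp_def, neg_mul] using this
  have := (Real.tendsto_exp_atBot.comp h1).div_const (Real.sqrt (2*Real.pi))
  simpa only [Function.comp_def, zero_div] using this

lemma integral_neg_mul_phi (t : ℝ) :
    ∫ u in Iic t, (-u) * stdGaussPDF u = stdGaussPDF t := by
  have h := integral_Iic_of_hasDerivAt_of_tendsto (f := stdGaussPDF)
    (f' := fun u => -u * stdGaussPDF u) (a := t) (m := 0)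
    (phi_cont.continuousWithinAt) (fun x _ => phi_hasDeriv x)
    (neg_mul_phi_integrable.integrableOn) phi_tendsto_atBot
  simpa using h

lemma cdf_nonneg (z : ℝ) : 0 ≤ stdGaussCDF z :=
  setIntegral_nonneg measurableSet_Iic fun u _ => (phi_pos u).le

lemma cdf_hasDeriv (z : ℝ) : HasDerivAt stdGaussCDF (stdGaussPDF z) z := by
  have key : stdGaussCDF = fun x : ℝ =>
      stdGaussCDF 0 + ∫ u in (0:ℝ)..x, stdGaussPDF u := by
    funext x
    rw [eq_comm, ← intervalIntegral.integral_Iic_sub_Iic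
      (phi_integrable.integrableOn) (phi_integrable.integrableOn)]
    show stdGaussCDF 0 + (stdGaussCDF x - stdGaussCDF 0) = stdGaussCDF x
    ring
  rw [key]
  exact (intervalIntegral.integral_hasDerivAt_right
    (phi_integrable.intervalIntegrable)
    (phi_cont.stronglyMeasurableAtFilter _ _)
    phi_cont.continuousAt).const_add _

lemma cdf_zero : stdGaussCDF 0 = 1/2 := by
  have htot : ∫ u : ℝ, stdGaussPDF u = 1 := by
    rw [phi_eq]
    rw [integral_div, integral_gaussian]
    rw [div_eq_one_iff_eq (by positivity : Real.sqrt (2*Real.pi) ≠ 0)]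
    congr 1
    ring
  have hsym : (∫ u in Iic (0:ℝ), stdGaussPDF u) = ∫ u in Ioi (0:ℝ), stdGaussPDF u := by
    have := integral_comp_neg_Iic (0:ℝ) stdGaussPDF
    simp only [neg_zero] at this
    rw [← this]
    refine setIntegral_congr_fun measurableSet_Iic fun u _ => ?_
    rw [phi_even]
  have hsum := intervalIntegral.integral_Iic_add_Ioi (b := (0:ℝ)) (f := stdGaussPDF)
    phi_integrable.integrableOn phi_integrable.integrableOn
  rw [htot, ← hsym] at hsum
  show (∫ u in Iic (0:ℝ), stdGaussPDF u) = 1/2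
  linarith

lemma key_lt {α : ℝ} (hα : 0 < α) : α * stdGaussCDF (-α) < stdGaussPDF α := by
  set g : ℝ → ℝ := fun u => (-u - α) * stdGaussPDF u with hg
  have hgint : Integrable g := by
    have h1 : g = fun u => -u * stdGaussPDF u - α * stdGaussPDF u := by
      funext u; rw [hg]; ring
    rw [h1]
    exact neg_mul_phi_integrable.sub (phi_integrable.const_mul α)
  have hI : ∫ u in Iic (-α), g u = stdGaussPDF α - α * stdGaussCDF (-α) := by
    have h1 : g = fun u => -u * stdGaussPDF u - α * stdGaussPDF u := by
      funext u; rw [hg]; ring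
    rw [h1, integral_sub (neg_mul_phi_integrable.integrableOn)
      ((phi_integrable.integrableOn).const_mul α),
      integral_neg_mul_phi, phi_even, integral_const_mul]
    rfl
  have hpos : 0 < ∫ u in Iic (-α), g u := by
    rw [setIntegral_pos_iff_support_of_nonneg_ae]
    · refine lt_of_lt_of_le ?_ (measure_mono
        (show Iio (-α) ⊆ Function.support g ∩ Iic (-α) from ?_))
      · rw [Real.volume_Iio]; exact ENNReal.zero_lt_top
      · intro u hu
        have hu' : u < -α := hu
        constructor
        · simp only [Function.mem_support, hg]
          exact mul_ne_zero (by linarith : -u - α ≠ 0) (phi_pos u).ne'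
        · exact hu'.le
    · filter_upwards [ae_restrict_mem measurableSet_Iic] with u hu
      have : u ≤ -α := hu
      have h1 : 0 ≤ -u - α := by linarith
      exact mul_nonneg h1 (phi_pos u).le
    · exact hgint.integrableOn
  linarith [hI ▸ hpos]

lemma F_hasDeriv (z : ℝ) :
    HasDerivAt (fun α : ℝ => (1+α^2) * stdGaussCDF (-α) - α * stdGaussPDF α)
      (2 * (z * stdGaussCDF (-z) - stdGaussPDF z)) z := by
  have h1 : HasDerivAt (fun x : ℝ => stdGaussCDF (-x)) (-stdGaussPDF z) z := by
    have h := (cdf_hasDeriv (-z)).comp z (hasDerivAt_neg z)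
    have : stdGaussPDF (-z) * -1 = -stdGaussPDF z := by rw [phi_even]; ring
    rw [this] at h
    exact h
  have h3 : HasDerivAt (fun x : ℝ => 1 + x^2) (2*z) z := by
    have := (hasDerivAt_pow 2 z).const_add 1
    simpa using this
  have h := (h3.mul h1).sub ((hasDerivAt_id z).mul (phi_hasDeriv z))
  refine h.congr_deriv ?_
  simp only [id_eq]
  ring

lemma F_strictAnti :
    StrictAnti (fun α : ℝ => (1+α^2) * stdGaussCDF (-α) - α * stdGaussPDF α) := by
  apply strictAnti_of_deriv_neg
  intro x
  rw [(F_hasDeriv x).deriv]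
  rcases le_or_gt x 0 with h | h
  · have h0 : 0 ≤ stdGaussCDF (-x) := cdf_nonneg _
    nlinarith [phi_pos x]
  · nlinarith [key_lt h]

lemma phi_le (b : ℝ) : stdGaussPDF b ≤ Real.exp (-b^2/2) := by
  rw [stdGaussPDF]
  refine div_le_self (Real.exp_pos _).le ?_
  rw [show (1:ℝ) = Real.sqrt 1 from (Real.sqrt_one).symm]
  exact Real.sqrt_le_sqrt (by nlinarith [Real.pi_gt_three])

lemma F_small {δ : ℝ} (hδ : 0 < δ) :
    ∃ b : ℝ, 0 ≤ b ∧ (1+b^2) * stdGaussCDF (-b) - b * stdGaussPDF b < δ/2 := by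
  refine ⟨max 16 (16/δ), le_trans (by norm_num) (le_max_left _ _), ?_⟩
  set b := max 16 (16/δ) with hb
  have hb16 : (16:ℝ) ≤ b := le_max_left _ _
  have hbδ : 16/δ ≤ b := le_max_right _ _
  have hbpos : (0:ℝ) < b := by linarith
  have h1 : stdGaussCDF (-b) ≤ stdGaussPDF b / b :=
    (lt_div_iff₀ hbpos).2 (by rw [mul_comm]; exact key_lt hbpos) |>.le
  have h2 : Real.exp (-b^2/2) ≤ 2/b^2 := by
    have h3 : b^2/2 + 1 ≤ Real.exp (b^2/2) := Real.add_one_le_exp _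
    have h4 : Real.exp (-b^2/2) = (Real.exp (b^2/2))⁻¹ := by
      rw [← Real.exp_neg]; ring_nf
    rw [h4, show (2:ℝ)/b^2 = (b^2/2)⁻¹ by rw [inv_div]]
    apply inv_anti₀ (by positivity)
    linarith
  have hphi : stdGaussPDF b ≤ 2/b^2 := (phi_le b).trans h2
  have hphipos := phi_pos b
  have hchain : (1+b^2) * stdGaussCDF (-b) - b * stdGaussPDF b ≤ 4/b := by
    have e1 : (1+b^2) * stdGaussCDF (-b) ≤ (1+b^2) * (stdGaussPDF b / b) :=
      mul_le_mul_of_nonneg_left h1 (by positivity)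
    have e2 : (1+b^2) * (stdGaussPDF b / b) ≤ 2*b * stdGaussPDF b := by
      rw [div_eq_mul_inv]
      have : 1 + b^2 ≤ 2*b^2 := by nlinarith
      calc (1+b^2) * (stdGaussPDF b * b⁻¹) ≤ 2*b^2 * (stdGaussPDF b * b⁻¹) := by
            apply mul_le_mul_of_nonneg_right this (by positivity)
        _ = 2*b * stdGaussPDF b := by
            field_simp
    have e3 : 2*b * stdGaussPDF b ≤ 2*b * (2/b^2) :=
      mul_le_mul_of_nonneg_left hphi (by positivity)
    have e4 : 2*b * (2/b^2) = 4/b := by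
      field_simp
      ring
    nlinarith [mul_nonneg hbpos.le hphipos.le]
  have h5 : 4/b ≤ δ/4 := by
    rw [div_le_div_iff₀ hbpos (by norm_num)]
    have h16 : (16:ℝ) = 16/δ * δ := by field_simp
    nlinarith [mul_le_mul_of_nonneg_right hbδ hδ.le]
  linarith

/-- For δ ∈ (0,1), the equation (1+α²)Φ(−α) − αφ(α) = δ/2 has a unique
non-negative solution α_min(δ). -/
theorem alpha_min_exists_unique (δ : ℝ) (hδ : δ ∈ Set.Ioo (0:ℝ) 1) :
    ∃! α : ℝ, 0 ≤ α ∧ (1+α^2) * stdGaussCDF (-α) - α * stdGaussPDF α = δ/2 := by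
  obtain ⟨hδ0, hδ1⟩ := hδ
  set F : ℝ → ℝ := fun α => (1+α^2) * stdGaussCDF (-α) - α * stdGaussPDF α with hF
  have hF0 : F 0 = 1/2 := by
    simp only [hF]
    rw [neg_zero, cdf_zero]
    ring
  obtain ⟨b, hb0, hbsmall⟩ := F_small hδ0
  have hcont : Continuous F := by
    rw [continuous_iff_continuousAt]
    exact fun x => (F_hasDeriv x).differentiableAt.continuousAt
  have hmem : δ/2 ∈ Icc (F b) (F 0) := ⟨hbsmall.le, by rw [hF0]; linarith⟩
  obtain ⟨α, hαmem, hαeq⟩ := intermediate_value_Icc' hb0 hcont.continuousOn hmem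
  refine ⟨α, ⟨hαmem.1, hαeq⟩, ?_⟩
  rintro y ⟨hy0, hyeq⟩
  exact F_strictAnti.injective (hyeq.trans hαeq.symm)
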